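/- Let α ∈ ℂ, β ∈ ℝ with β < Re α, and let u : (0,1] → ℂ be continuously differentiable with |x * u'(x) − α * u(x)| ≤ C * x^β for all x ∈ (0,1]. Then there is a constant C' such that |u(x)| ≤ C' * x^β for all x ∈ (0,1]. -/

import Mathlib

/-- If `β < Re α` and `|x u'(x) − α u(x)| ≤ C x^β` on `(0,1]` for a `C¹` function `u`,
then `|u(x)| ≤ C' x^β` on `(0,1]` for some constant `C'`. -/
theorem stmt3 (α : ℂ) (β C : ℝ) (hβ : β < α.re) (u u' : ℝ → ℂ)
    (hderiv : ∀ x ∈ Set.Ioc (0 : ℝ) 1, HasDerivAt u (u' x) x)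
    (hcont : ContinuousOn u' (Set.Ioc 0 1))
    (hbound : ∀ x ∈ Set.Ioc (0 : ℝ) 1, ‖(x : ℂ) * u' x - α * u x‖ ≤ C * x ^ β) :
    ∃ C' : ℝ, ∀ x ∈ Set.Ioc (0 : ℝ) 1, ‖u x‖ ≤ C' * x ^ β := by
  have hC : 0 ≤ C := by
    have h := hbound 1 ⟨one_pos, le_refl 1⟩
    simpa using le_trans (norm_nonneg _) h
  set δ : ℝ := α.re - β with hδdef
  have hδ : 0 < δ := by simp only [hδdef]; linarith
  clear_value δ
  set v : ℝ → ℂ := fun s => (s : ℂ) ^ (-α) * u s with hv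
  set w : ℝ → ℂ := fun s => (-α * (s : ℂ) ^ (-α - 1)) * u s + (s : ℂ) ^ (-α) * u' s with hw
  -- derivative of v
  have hvderiv : ∀ s ∈ Set.Ioc (0 : ℝ) 1, HasDerivAt v (w s) s := by
    intro s hs
    have hslit : (s : ℂ) ∈ Complex.slitPlane := Or.inl (by simpa using hs.1)
    have h1 : HasDerivAt (fun t : ℝ => (t : ℂ) ^ (-α)) (-α * (s : ℂ) ^ (-α - 1)) s := by
      have := (Complex.hasStrictDerivAt_cpow_const (c := -α)
        hslit).hasDerivAt.comp_ofReal (z := s)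
      simpa using this
    exact h1.mul (hderiv s hs)
  -- continuity of u on Ioc
  have hucont : ContinuousOn u (Set.Ioc 0 1) := fun s hs =>
    ((hderiv s hs).continuousAt).continuousWithinAt
  have hcp : ∀ c : ℂ, ContinuousOn (fun s : ℝ => (s : ℂ) ^ c) (Set.Ioc (0 : ℝ) 1) := by
    intro c s hs
    exact ((continuousAt_cpow_const (Or.inl (by simpa using hs.1))).comp
      Complex.continuous_ofReal.continuousAt).continuousWithinAt
  have hwcont : ContinuousOn w (Set.Ioc 0 1) :=
    ((continuousOn_const.mul (hcp (-α - 1))).mul hucont).add ((hcp (-α)).mul hcont)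
  -- norm bound for w
  have hwbound : ∀ s ∈ Set.Ioc (0 : ℝ) 1, ‖w s‖ ≤ C * s ^ (-δ - 1) := by
    intro s hs
    have hs0 : (0 : ℝ) < s := hs.1
    have hsC : (s : ℂ) ≠ 0 := by exact_mod_cast hs0.ne'
    have key : w s = (s : ℂ) ^ (-α - 1) * ((s : ℂ) * u' s - α * u s) := by
      have h1 : (s : ℂ) ^ (-α - 1) * s = (s : ℂ) ^ (-α) := by
        rw [Complex.cpow_sub _ _ hsC, Complex.cpow_one, div_mul_cancel₀ _ hsC]
      simp only [hw, ← h1]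
      ring
    rw [key, norm_mul]
    have hnorm : ‖(s : ℂ) ^ (-α - 1)‖ = s ^ (-α.re - 1) := by
      rw [Complex.norm_cpow_eq_rpow_re_of_pos hs0]
      norm_num
    rw [hnorm]
    calc s ^ (-α.re - 1) * ‖(s : ℂ) * u' s - α * u s‖
        ≤ s ^ (-α.re - 1) * (C * s ^ β) := by
          exact mul_le_mul_of_nonneg_left (hbound s hs) (Real.rpow_nonneg hs0.le _)
      _ = C * s ^ (-δ - 1) := by
          have he : -α.re - 1 + β = -δ - 1 := by rw [hδdef]; ring
          rw [mul_left_comm, ← Real.rpow_add hs0, he]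
  refine ⟨‖u 1‖ + C / δ, ?_⟩
  intro x hx
  have hx0 : 0 < x := hx.1
  have hx1 : x ≤ 1 := hx.2
  have hsub : Set.Icc x 1 ⊆ Set.Ioc 0 1 := fun t ht => ⟨lt_of_lt_of_le hx0 ht.1, ht.2⟩
  have hint : IntervalIntegrable w MeasureTheory.volume x 1 := by
    apply ContinuousOn.intervalIntegrable
    rw [Set.uIcc_of_le hx1]
    exact hwcont.mono hsub
  have hftc : ∫ t in x..1, w t = v 1 - v x := by
    apply intervalIntegral.integral_eq_sub_of_hasDerivAt
    · intro t ht
      exact hvderiv t (hsub (by rwa [Set.uIcc_of_le hx1] at ht))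
    · exact hint
  have hgint : IntervalIntegrable (fun t : ℝ => C * t ^ (-δ - 1)) MeasureTheory.volume x 1 := by
    apply ContinuousOn.intervalIntegrable
    apply continuousOn_const.mul
    intro t ht
    rw [Set.uIcc_of_le hx1] at ht
    exact (Real.continuousAt_rpow_const t _ (Or.inl (hx0.trans_le ht.1).ne')).continuousWithinAt
  have hnormint : ‖v 1 - v x‖ ≤ ∫ t in x..1, C * t ^ (-δ - 1) := by
    rw [← hftc]
    calc ‖∫ t in x..1, w t‖ ≤ ∫ t in x..1, ‖w t‖ :=
          intervalIntegral.norm_integral_le_integral_norm hx1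
      _ ≤ ∫ t in x..1, C * t ^ (-δ - 1) := by
          apply intervalIntegral.integral_mono_on hx1 hint.norm hgint
          intro t ht
          exact hwbound t (hsub ht)
  have hintval : ∫ t in x..1, C * t ^ (-δ - 1) = C / δ * (x ^ (-δ) - 1) := by
    rw [intervalIntegral.integral_const_mul, integral_rpow]
    · rw [show -δ - 1 + 1 = -δ by ring, Real.one_rpow,
        show (1 - x ^ (-δ)) / (-δ) = (x ^ (-δ) - 1) / δ by
          rw [← neg_sub (x ^ (-δ)) 1, neg_div_neg_eq],
        div_mul_eq_mul_div, mul_div_assoc]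
    · refine Or.inr ⟨(by linarith : -δ - 1 < -1).ne, ?_⟩
      rw [Set.uIcc_of_le hx1]
      intro h
      exact absurd h.1 (not_le.mpr hx0)
  have hv1 : v 1 = u 1 := by simp [hv]
  have hvx : ‖v x‖ ≤ ‖u 1‖ + C / δ * (x ^ (-δ) - 1) := by
    have h1 : ‖v x‖ ≤ ‖v 1‖ + ‖v 1 - v x‖ := by
      calc ‖v x‖ = ‖v 1 - (v 1 - v x)‖ := by rw [sub_sub_cancel]
        _ ≤ ‖v 1‖ + ‖v 1 - v x‖ := norm_sub_le _ _
    have hn1 : ‖v 1‖ = ‖u 1‖ := by rw [hv1]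
    have h2 : ‖v 1 - v x‖ ≤ C / δ * (x ^ (-δ) - 1) := hnormint.trans_eq hintval
    linarith
  have hxpow : (1 : ℝ) ≤ x ^ (-δ) :=
    Real.one_le_rpow_of_pos_of_le_one_of_nonpos hx0 hx1 (by linarith)
  have hCd : 0 ≤ C / δ := div_nonneg hC hδ.le
  have hvx2 : ‖v x‖ ≤ (‖u 1‖ + C / δ) * x ^ (-δ) := by
    have hA : (0 : ℝ) ≤ ‖u 1‖ := norm_nonneg _
    nlinarith [hvx, hxpow, hCd, hA]
  have hux : ‖u x‖ = x ^ α.re * ‖v x‖ := by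
    have hnorm : ‖(x : ℂ) ^ (-α)‖ = x ^ (-α.re) := by
      rw [Complex.norm_cpow_eq_rpow_re_of_pos hx0]
      simp
    rw [hv]
    simp only [norm_mul, hnorm]
    rw [← mul_assoc, ← Real.rpow_add hx0]
    simp
  rw [hux]
  calc x ^ α.re * ‖v x‖ ≤ x ^ α.re * ((‖u 1‖ + C / δ) * x ^ (-δ)) := by
        exact mul_le_mul_of_nonneg_left hvx2 (Real.rpow_nonneg hx0.le _)
    _ = (‖u 1‖ + C / δ) * x ^ β := by
        have he : -δ + α.re = β := by rw [hδdef]; ring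
        rw [mul_comm (x ^ α.re), mul_assoc, ← Real.rpow_add hx0, he]
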